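/- Let m, n ≥ 3 be integers with at least one of m, n odd, and let G_{m,n} be the subgroup of SL(2,ℝ) generated by A = [[1, 2cos(π/m) + 2cos(π/n)], [0, 1]] and B = [[2cos(π/m), 1], [−1, 0]]. Then each of the points 0, 1, and ∞ is a parabolic fixed point of G_{m,n}: for each of these three points there exists a parabolic element of G_{m,n} fixing it under the Möbius action. -/

import Mathlib

open Real Matrix

/-- A matrix in SL(2,ℝ) is parabolic if it is not ±I and has trace of absolute value 2. -/
def IsParabolicMat (M : Matrix (Fin 2) (Fin 2) ℝ) : Prop :=
  M ≠ 1 ∧ M ≠ -1 ∧ |Matrix.trace M| = 2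

/-- The Möbius action of `M` fixes the real number `z`. -/
def MoebiusFixes (M : Matrix (Fin 2) (Fin 2) ℝ) (z : ℝ) : Prop :=
  M 0 0 * z + M 0 1 = (M 1 0 * z + M 1 1) * z

/-- The Möbius action of `M` fixes the point ∞. -/
def MoebiusFixesInf (M : Matrix (Fin 2) (Fin 2) ℝ) : Prop :=
  M 1 0 = 0

lemma pow_rot_aux (t : ℝ) (ht : Real.sin t ≠ 0) (j : ℕ) :
    (!![2*Real.cos t, 1; -1, 0] : Matrix (Fin 2) (Fin 2) ℝ)^(j+1)
      = (Real.sin t)⁻¹ • !![Real.sin (((j:ℝ)+2)*t), Real.sin (((j:ℝ)+1)*t);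
          -Real.sin (((j:ℝ)+1)*t), -Real.sin ((j:ℝ)*t)] := by
  have key : ∀ x : ℝ, Real.sin ((x+2)*t) = 2*Real.cos t*Real.sin ((x+1)*t) - Real.sin (x*t) := by
    intro x
    have h1 : (x+2)*t = (x+1)*t + t := by ring
    have h2 : x*t = (x+1)*t - t := by ring
    rw [h1, h2, Real.sin_add, Real.sin_sub]; ring
  induction j with
  | zero =>
      ext i l
      fin_cases i <;> fin_cases l <;>
        simp [Real.sin_two_mul] <;> field_simp <;> ring
  | succ j ih =>
      rw [pow_succ, ih, Matrix.smul_mul, Matrix.mul_fin_two]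
      push_cast
      rw [show ((j:ℝ)+1+1) = (j:ℝ)+2 by ring, show ((j:ℝ)+1+2) = (j:ℝ)+3 by ring]
      have key2 : Real.sin (((j:ℝ)+3)*t)
          = 2*Real.cos t*Real.sin (((j:ℝ)+2)*t) - Real.sin (((j:ℝ)+1)*t) := by
        rw [show ((j:ℝ)+3) = ((j:ℝ)+1)+2 by ring, show ((j:ℝ)+2) = ((j:ℝ)+1)+1 by ring]
        exact key _
      congr 1
      ext i l
      fin_cases i <;> fin_cases l <;> simp <;>
        first
          | ring1
          | linear_combination key2
          | linear_combination -key2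
          | linear_combination key (j:ℝ)
          | linear_combination -key (j:ℝ)

lemma conj_par_aux (s : ℝ) (hs : s ≠ 0) (A g : Matrix.SpecialLinearGroup (Fin 2) ℝ)
    (hA : (A : Matrix (Fin 2) (Fin 2) ℝ) = !![1, s; 0, 1])
    (hg : (g : Matrix (Fin 2) (Fin 2) ℝ) 0 0 = (g : Matrix (Fin 2) (Fin 2) ℝ) 1 0)
    (hg0 : (g : Matrix (Fin 2) (Fin 2) ℝ) 0 0 ≠ 0) :
    IsParabolicMat ((g * A * g⁻¹ : Matrix.SpecialLinearGroup (Fin 2) ℝ) : Matrix (Fin 2) (Fin 2) ℝ) ∧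
      MoebiusFixes ((g * A * g⁻¹ : Matrix.SpecialLinearGroup (Fin 2) ℝ) : Matrix (Fin 2) (Fin 2) ℝ) 1 := by
  obtain ⟨a, b, c, d, ha, hb, hc, hd⟩ :
      ∃ a b c d, (g : Matrix (Fin 2) (Fin 2) ℝ) 0 0 = a ∧ (g : Matrix (Fin 2) (Fin 2) ℝ) 0 1 = b
        ∧ (g : Matrix (Fin 2) (Fin 2) ℝ) 1 0 = c ∧ (g : Matrix (Fin 2) (Fin 2) ℝ) 1 1 = d :=
    ⟨_, _, _, _, rfl, rfl, rfl, rfl⟩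
  have hca : c = a := by rw [← ha, ← hc, hg]
  have hg' : (g : Matrix (Fin 2) (Fin 2) ℝ) = !![a, b; a, d] := by
    rw [Matrix.eta_fin_two ((g : Matrix (Fin 2) (Fin 2) ℝ)), ha, hb, hc, hd, hca]
  have hdet : a * d - b * a = 1 := by
    have h := g.2
    rw [Matrix.det_fin_two, ha, hb, hc, hd, hca] at h
    exact h
  have ha0 : a ≠ 0 := ha ▸ hg0
  have hP : ((g * A * g⁻¹ : Matrix.SpecialLinearGroup (Fin 2) ℝ) : Matrix (Fin 2) (Fin 2) ℝ)
      = !![1 - s*a^2, s*a^2; -(s*a^2), 1 + s*a^2] := by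
    rw [Matrix.SpecialLinearGroup.coe_mul, Matrix.SpecialLinearGroup.coe_mul,
      Matrix.SpecialLinearGroup.coe_inv, hA, hg', Matrix.adjugate_fin_two,
      Matrix.mul_fin_two, Matrix.mul_fin_two]
    ext i l
    fin_cases i <;> fin_cases l <;> simp <;>
      first | ring1 | linear_combination hdet
  refine ⟨⟨?_, ?_, ?_⟩, ?_⟩
  · intro h
    rw [hP] at h
    have := congrFun (congrFun h 0) 1
    simp [Matrix.one_apply] at this
    rcases this with h'|h'
    · exact hs h'
    · exact ha0 h'
  · intro h
    rw [hP] at h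
    have := congrFun (congrFun h 0) 1
    simp [Matrix.one_apply] at this
    rcases this with h'|h'
    · exact hs h'
    · exact ha0 h'
  · rw [hP, Matrix.trace_fin_two]
    norm_num
  · rw [hP]
    simp [MoebiusFixes]

lemma cos_nat_pi_ne_zero (k : ℕ) : Real.cos ((k:ℝ)*π) ≠ 0 := by
  have h1 := Real.sin_nat_mul_pi k
  have h2 := Real.sin_sq_add_cos_sq ((k:ℝ)*π)
  intro hcc
  rw [h1, hcc] at h2
  norm_num at h2

set_option maxHeartbeats 1600000 in
theorem stmt11 (m n : ℕ) (hm : 3 ≤ m) (hn : 3 ≤ n) (hodd : Odd m ∨ Odd n)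
    (A B : Matrix.SpecialLinearGroup (Fin 2) ℝ)
    (hA : (A : Matrix (Fin 2) (Fin 2) ℝ) =
      !![1, 2 * Real.cos (Real.pi / (m : ℝ)) + 2 * Real.cos (Real.pi / (n : ℝ)); 0, 1])
    (hB : (B : Matrix (Fin 2) (Fin 2) ℝ) =
      !![2 * Real.cos (Real.pi / (m : ℝ)), 1; -1, 0]) :
    (∃ P ∈ Subgroup.closure ({A, B} : Set (Matrix.SpecialLinearGroup (Fin 2) ℝ)),
      IsParabolicMat (P : Matrix (Fin 2) (Fin 2) ℝ) ∧
        MoebiusFixes (P : Matrix (Fin 2) (Fin 2) ℝ) 0) ∧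
    (∃ P ∈ Subgroup.closure ({A, B} : Set (Matrix.SpecialLinearGroup (Fin 2) ℝ)),
      IsParabolicMat (P : Matrix (Fin 2) (Fin 2) ℝ) ∧
        MoebiusFixes (P : Matrix (Fin 2) (Fin 2) ℝ) 1) ∧
    (∃ P ∈ Subgroup.closure ({A, B} : Set (Matrix.SpecialLinearGroup (Fin 2) ℝ)),
      IsParabolicMat (P : Matrix (Fin 2) (Fin 2) ℝ) ∧
        MoebiusFixesInf (P : Matrix (Fin 2) (Fin 2) ℝ)) := by
  have hπ := Real.pi_pos
  have hm0 : (0:ℝ) < m := by exact_mod_cast Nat.lt_of_lt_of_le (by norm_num) hm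
  have hn0 : (0:ℝ) < n := by exact_mod_cast Nat.lt_of_lt_of_le (by norm_num) hn
  have hm3 : (3:ℝ) ≤ m := by exact_mod_cast hm
  have hn3 : (3:ℝ) ≤ n := by exact_mod_cast hn
  have hcm : (1:ℝ)/2 ≤ Real.cos (π/(m:ℝ)) := by
    rw [show (1:ℝ)/2 = Real.cos (π/3) by rw [Real.cos_pi_div_three]]
    apply Real.cos_le_cos_of_nonneg_of_le_pi (by positivity) (by linarith)
    rw [div_le_div_iff₀ hm0 (by norm_num)]
    nlinarith
  have hcn : (1:ℝ)/2 ≤ Real.cos (π/(n:ℝ)) := by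
    rw [show (1:ℝ)/2 = Real.cos (π/3) by rw [Real.cos_pi_div_three]]
    apply Real.cos_le_cos_of_nonneg_of_le_pi (by positivity) (by linarith)
    rw [div_le_div_iff₀ hn0 (by norm_num)]
    nlinarith
  set s : ℝ := 2 * Real.cos (π/(m:ℝ)) + 2 * Real.cos (π/(n:ℝ)) with hsdef
  have hs : 0 < s := by rw [hsdef]; linarith
  have hAmem : A ∈ Subgroup.closure ({A, B} : Set (Matrix.SpecialLinearGroup (Fin 2) ℝ)) :=
    Subgroup.subset_closure (Set.mem_insert _ _)
  have hBmem : B ∈ Subgroup.closure ({A, B} : Set (Matrix.SpecialLinearGroup (Fin 2) ℝ)) :=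
    Subgroup.subset_closure (Set.mem_insert_of_mem _ rfl)
  -- the element fixing 0
  have h0 : ((B⁻¹ * A * B : Matrix.SpecialLinearGroup (Fin 2) ℝ) : Matrix (Fin 2) (Fin 2) ℝ)
      = !![1, 0; -s, 1] := by
    rw [Matrix.SpecialLinearGroup.coe_mul, Matrix.SpecialLinearGroup.coe_mul,
      Matrix.SpecialLinearGroup.coe_inv, hA, hB, Matrix.adjugate_fin_two,
      Matrix.mul_fin_two, Matrix.mul_fin_two]
    ext i l
    fin_cases i <;> fin_cases l <;> simp [hsdef] <;> ring
  refine ⟨⟨B⁻¹ * A * B, mul_mem (mul_mem (inv_mem hBmem) hAmem) hBmem, ⟨?_, ?_, ?_⟩, ?_⟩,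
    ?_, ⟨A, hAmem, ⟨?_, ?_, ?_⟩, ?_⟩⟩
  · intro h
    rw [h0] at h
    have := congrFun (congrFun h 1) 0
    simp [Matrix.one_apply] at this
    exact absurd this (by linarith)
  · intro h
    rw [h0] at h
    have := congrFun (congrFun h 0) 0
    simp [Matrix.one_apply] at this
    norm_num at this
  · rw [h0, Matrix.trace_fin_two]
    norm_num
  · rw [h0]
    simp [MoebiusFixes]
  -- the element fixing 1
  · set t : ℝ := π - π/(n:ℝ) with htdef
    have htlt : π/(n:ℝ) < π := by
      rw [div_lt_iff₀ hn0]; nlinarith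
    have ht : Real.sin t ≠ 0 := by
      rw [htdef, Real.sin_pi_sub]
      exact (Real.sin_pos_of_pos_of_lt_pi (by positivity) htlt).ne'
    have hAB : ((A * B : Matrix.SpecialLinearGroup (Fin 2) ℝ) : Matrix (Fin 2) (Fin 2) ℝ)
        = !![2 * Real.cos t, 1; -1, 0] := by
      rw [Matrix.SpecialLinearGroup.coe_mul, hA, hB, Matrix.mul_fin_two]
      ext i l
      fin_cases i <;> fin_cases l <;>
        simp [htdef, hsdef, Real.cos_pi_sub] <;> ring
    rcases Nat.even_or_odd n with hne | hno
    · -- n even, so m is odd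
      have hmo : Odd m := by
        rcases hodd with h | h
        · exact h
        · exact absurd h (Nat.not_odd_iff_even.mpr hne)
      obtain ⟨j, hj⟩ := hmo
      obtain ⟨j', rfl⟩ : ∃ j', j = j' + 1 := ⟨j - 1, by omega⟩
      obtain ⟨h, hh⟩ := hne
      obtain ⟨h', rfl⟩ : ∃ h', h = h' + 1 := ⟨h - 1, by omega⟩
      have hnr : (n:ℝ) = 2*((h':ℝ)+1) := by rw [hh]; push_cast; ring
      have hmr : (m:ℝ) = 2*(j':ℝ)+3 := by rw [hj]; push_cast; ring
      set ψ : ℝ := π/(m:ℝ) with hψdef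
      have hψlt : ψ < π := by rw [hψdef, div_lt_iff₀ hm0]; nlinarith
      have hψ : Real.sin ψ ≠ 0 :=
        (Real.sin_pos_of_pos_of_lt_pi (by rw [hψdef]; positivity) hψlt).ne'
      set g : Matrix.SpecialLinearGroup (Fin 2) ℝ := (A*B)^(h'+1) * B^(j'+1) with hgdef
      have hgc : (g : Matrix (Fin 2) (Fin 2) ℝ)
          = (Real.sin t)⁻¹ • ((Real.sin ψ)⁻¹ •
            (!![Real.sin (((h':ℝ)+2)*t), Real.sin (((h':ℝ)+1)*t);
                -Real.sin (((h':ℝ)+1)*t), -Real.sin ((h':ℝ)*t)] *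
             !![Real.sin (((j':ℝ)+2)*ψ), Real.sin (((j':ℝ)+1)*ψ);
                -Real.sin (((j':ℝ)+1)*ψ), -Real.sin ((j':ℝ)*ψ)])) := by
        rw [hgdef, Matrix.SpecialLinearGroup.coe_mul, Matrix.SpecialLinearGroup.coe_pow,
          Matrix.SpecialLinearGroup.coe_pow, hAB, hB, pow_rot_aux t ht h',
          pow_rot_aux ψ hψ j', Matrix.smul_mul, Matrix.mul_smul]
      have e1 : ((h':ℝ)+1)*t = ((h'+1:ℕ):ℝ)*π - π/2 := by
        rw [htdef, hnr]
        have hne0 : 2*((h':ℝ)+1) ≠ 0 := by positivity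
        push_cast
        field_simp
      have F1 : Real.sin (((h':ℝ)+1)*t) = -Real.cos (((h'+1:ℕ):ℝ)*π) := by
        rw [e1, Real.sin_sub, Real.cos_pi_div_two, Real.sin_pi_div_two, Real.sin_nat_mul_pi]
        ring
      have F0 : Real.cos (((h':ℝ)+1)*t) = 0 := by
        rw [e1, Real.cos_sub, Real.cos_pi_div_two, Real.sin_pi_div_two, Real.sin_nat_mul_pi]
        ring
      have F2 : Real.sin (((h':ℝ)+2)*t) = -Real.cos (((h'+1:ℕ):ℝ)*π) * Real.cos t := by
        rw [show ((h':ℝ)+2)*t = ((h':ℝ)+1)*t + t by ring, Real.sin_add, F1, F0]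
        ring
      have F3 : Real.sin ((h':ℝ)*t) = -Real.cos (((h'+1:ℕ):ℝ)*π) * Real.cos t := by
        rw [show (h':ℝ)*t = ((h':ℝ)+1)*t - t by ring, Real.sin_sub, F1, F0]
        ring
      have F4 : Real.sin (((j':ℝ)+2)*ψ) = Real.sin (((j':ℝ)+1)*ψ) := by
        rw [show ((j':ℝ)+2)*ψ = π - ((j':ℝ)+1)*ψ by
          rw [hψdef, hmr]
          have : (2*(j':ℝ)+3) ≠ 0 := by positivity
          field_simp
          ring]
        exact Real.sin_pi_sub _
      have hsJ : 0 < Real.sin (((j':ℝ)+1)*ψ) := by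
        apply Real.sin_pos_of_pos_of_lt_pi
        · rw [hψdef]; positivity
        · rw [hψdef, hmr]
          rw [show ((j':ℝ)+1)*(π/(2*(j':ℝ)+3)) = ((j':ℝ)+1)*π/(2*(j':ℝ)+3) by ring,
            div_lt_iff₀ (by positivity)]
          nlinarith
      have hcH : Real.cos (((h'+1:ℕ):ℝ)*π) ≠ 0 := cos_nat_pi_ne_zero _
      have h1c : (0:ℝ) < 1 - Real.cos t := by
        rw [htdef, Real.cos_pi_sub]
        linarith
      have h00 : (g : Matrix (Fin 2) (Fin 2) ℝ) 0 0
          = (Real.sin t)⁻¹ * ((Real.sin ψ)⁻¹ *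
            (Real.cos (((h'+1:ℕ):ℝ)*π) * Real.sin (((j':ℝ)+1)*ψ) * (1 - Real.cos t))) := by
        rw [hgc, Matrix.mul_fin_two]
        simp only [Matrix.smul_apply, smul_eq_mul, Matrix.of_apply, Matrix.cons_val_zero,
          Matrix.cons_val_one, Matrix.head_cons, Matrix.head_fin_const]
        rw [F2, F1, F4]
        ring
      have h10 : (g : Matrix (Fin 2) (Fin 2) ℝ) 1 0
          = (Real.sin t)⁻¹ * ((Real.sin ψ)⁻¹ *
            (Real.cos (((h'+1:ℕ):ℝ)*π) * Real.sin (((j':ℝ)+1)*ψ) * (1 - Real.cos t))) := by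
        rw [hgc, Matrix.mul_fin_two]
        simp only [Matrix.smul_apply, smul_eq_mul, Matrix.of_apply, Matrix.cons_val_zero,
          Matrix.cons_val_one, Matrix.head_cons, Matrix.head_fin_const]
        rw [F1, F3, F4]
        ring
      have hgeq : (g : Matrix (Fin 2) (Fin 2) ℝ) 0 0 = (g : Matrix (Fin 2) (Fin 2) ℝ) 1 0 :=
        h00.trans h10.symm
      have hgne : (g : Matrix (Fin 2) (Fin 2) ℝ) 0 0 ≠ 0 := by
        rw [h00]
        exact mul_ne_zero (inv_ne_zero ht) (mul_ne_zero (inv_ne_zero hψ)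
          (mul_ne_zero (mul_ne_zero hcH hsJ.ne') h1c.ne'))
      obtain ⟨hpar, hfix⟩ := conj_par_aux s hs.ne' A g hA hgeq hgne
      exact ⟨g * A * g⁻¹,
        mul_mem (mul_mem (mul_mem (pow_mem (mul_mem hAmem hBmem) _) (pow_mem hBmem _)) hAmem)
          (inv_mem (mul_mem (pow_mem (mul_mem hAmem hBmem) _) (pow_mem hBmem _))),
        hpar, hfix⟩
    · -- n odd
      obtain ⟨k, hk⟩ := hno
      obtain ⟨k', rfl⟩ : ∃ k', k = k' + 1 := ⟨k - 1, by omega⟩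
      have hnr : (n:ℝ) = 2*(k':ℝ)+3 := by rw [hk]; push_cast; ring
      set g : Matrix.SpecialLinearGroup (Fin 2) ℝ := (A*B)^(k'+1) with hgdef
      have hgc : (g : Matrix (Fin 2) (Fin 2) ℝ)
          = (Real.sin t)⁻¹ • !![Real.sin (((k':ℝ)+2)*t), Real.sin (((k':ℝ)+1)*t);
              -Real.sin (((k':ℝ)+1)*t), -Real.sin ((k':ℝ)*t)] := by
        rw [hgdef, Matrix.SpecialLinearGroup.coe_pow, hAB, pow_rot_aux t ht k']
      have e : ((k':ℝ)+2)*t = 2*((k':ℝ)+1)*π - ((k':ℝ)+1)*t := by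
        rw [htdef, hnr]
        have : (2*(k':ℝ)+3) ≠ 0 := by positivity
        field_simp
        ring
      have ssin : Real.sin (2*((k':ℝ)+1)*π) = 0 := by
        rw [show 2*((k':ℝ)+1)*π = ((2*(k'+1):ℕ):ℝ)*π by push_cast; ring]
        exact Real.sin_nat_mul_pi _
      have scos : Real.cos (2*((k':ℝ)+1)*π) = 1 := by
        rw [show 2*((k':ℝ)+1)*π = ((k'+1:ℕ):ℝ)*(2*π) by push_cast; ring]
        exact Real.cos_nat_mul_two_pi _
      have sin_e : Real.sin (((k':ℝ)+2)*t) = -Real.sin (((k':ℝ)+1)*t) := by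
        rw [e, Real.sin_sub, ssin, scos]
        ring
      have ne1 : Real.sin (((k':ℝ)+1)*t) ≠ 0 := by
        have e2 : ((k':ℝ)+1)*t = ((k'+1:ℕ):ℝ)*π - ((k':ℝ)+1)*(π/(n:ℝ)) := by
          rw [htdef]; push_cast; ring
        have hgt : 0 < ((k':ℝ)+1)*(π/(n:ℝ)) := by positivity
        have hlt : ((k':ℝ)+1)*(π/(n:ℝ)) < π := by
          rw [hnr, show ((k':ℝ)+1)*(π/(2*(k':ℝ)+3)) = ((k':ℝ)+1)*π/(2*(k':ℝ)+3) by ring,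
            div_lt_iff₀ (by positivity)]
          nlinarith
        rw [e2, Real.sin_sub, Real.sin_nat_mul_pi]
        simp only [zero_mul, zero_sub]
        exact neg_ne_zero.mpr (mul_ne_zero (cos_nat_pi_ne_zero _)
          (Real.sin_pos_of_pos_of_lt_pi hgt hlt).ne')
      have h00 : (g : Matrix (Fin 2) (Fin 2) ℝ) 0 0
          = (Real.sin t)⁻¹ * (-Real.sin (((k':ℝ)+1)*t)) := by
        rw [hgc]
        simp only [Matrix.smul_apply, smul_eq_mul, Matrix.of_apply, Matrix.cons_val_zero,
          Matrix.cons_val_one, Matrix.head_cons, Matrix.head_fin_const]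
        rw [sin_e]
      have h10 : (g : Matrix (Fin 2) (Fin 2) ℝ) 1 0
          = (Real.sin t)⁻¹ * (-Real.sin (((k':ℝ)+1)*t)) := by
        rw [hgc]
        simp only [Matrix.smul_apply, smul_eq_mul, Matrix.of_apply, Matrix.cons_val_zero,
          Matrix.cons_val_one, Matrix.head_cons, Matrix.head_fin_const]
      have hgeq : (g : Matrix (Fin 2) (Fin 2) ℝ) 0 0 = (g : Matrix (Fin 2) (Fin 2) ℝ) 1 0 :=
        h00.trans h10.symm
      have hgne : (g : Matrix (Fin 2) (Fin 2) ℝ) 0 0 ≠ 0 := by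
        rw [h00]
        exact mul_ne_zero (inv_ne_zero ht) (neg_ne_zero.mpr ne1)
      obtain ⟨hpar, hfix⟩ := conj_par_aux s hs.ne' A g hA hgeq hgne
      exact ⟨g * A * g⁻¹,
        mul_mem (mul_mem (pow_mem (mul_mem hAmem hBmem) _) hAmem)
          (inv_mem (pow_mem (mul_mem hAmem hBmem) _)),
        hpar, hfix⟩
  -- the element fixing ∞
  · intro h
    rw [hA] at h
    have := congrFun (congrFun h 0) 1
    simp [Matrix.one_apply] at this
    exact absurd this (by linarith)
  · intro h
    rw [hA] at h
    have := congrFun (congrFun h 0) 0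
    simp [Matrix.one_apply] at this
    norm_num at this
  · rw [hA, Matrix.trace_fin_two]
    norm_num
  · rw [hA]
    simp [MoebiusFixesInf]
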